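/- Let ν ≥ 2 be an integer and let p be a source with p(1) ≤ 1/(2^ν − 1). Then there exists a codeword-length vector l ∈ ℒ_n with R*(l,p) = R*_opt(p) and l(1) ≥ ν. -/

import Mathlib

/-- A source: a positive, monotonically nonincreasing probability mass function on `Fin n`. -/
def IsSource (n : ℕ) (p : Fin n → ℝ) : Prop :=
  (∀ i, 0 < p i) ∧ (∑ i, p i = 1) ∧ (∀ i j : Fin n, i ≤ j → p j ≤ p i)

/-- A codeword-length vector: positive integer lengths satisfying the Kraft inequality. -/
def IsCLV (n : ℕ) (l : Fin n → ℤ) : Prop :=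
  (∀ i, 1 ≤ l i) ∧ (∑ i, (2:ℝ) ^ (-(l i)) ≤ 1)

/-- Maximum pointwise redundancy `R*(l,p) = max_i (l(i) + lg p(i))`. -/
noncomputable def Rstar (n : ℕ) (l : Fin n → ℤ) (p : Fin n → ℝ) : ℝ :=
  ⨆ i : Fin n, ((l i : ℝ) + Real.logb 2 (p i))

/-- Minimum maximum pointwise redundancy over all codeword-length vectors. -/
noncomputable def RstarOpt (n : ℕ) (p : Fin n → ℝ) : ℝ :=
  sInf {r : ℝ | ∃ l : Fin n → ℤ, IsCLV n l ∧ Rstar n l p = r}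

theorem stmt17 (n : ℕ) (hn : 2 ≤ n) (ν : ℕ) (hν : 2 ≤ ν)
    (p : Fin n → ℝ) (hp : IsSource n p)
    (h1 : p ⟨0, by omega⟩ ≤ 1 / ((2:ℝ) ^ ν - 1)) :
    ∃ l : Fin n → ℤ, IsCLV n l ∧ Rstar n l p = RstarOpt n p ∧
      (ν:ℤ) ≤ l ⟨0, by omega⟩ := by
  obtain ⟨hpos, hsum, hmono⟩ := hp
  set i0 : Fin n := ⟨0, by omega⟩ with hi0
  haveI : Nonempty (Fin n) := ⟨i0⟩
  have hple : ∀ i, p i ≤ p i0 := fun i => hmono i0 i (by simp [hi0, Fin.le_def])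
  have hp1pos : 0 < p i0 := hpos i0
  have h4 : (4:ℝ) ≤ 2^ν := by
    calc (4:ℝ) = 2^2 := by norm_num
    _ ≤ 2^ν := by apply pow_le_pow_right₀ (by norm_num) hν
  have h2ν3 : (3:ℝ) ≤ 2^ν - 1 := by linarith
  have hp1le : p i0 ≤ 1/3 := h1.trans (by
    rw [div_le_div_iff₀ (by linarith) (by norm_num)]; linarith)
  have hterm : ∀ (l : Fin n → ℤ) (i : Fin n),
      (l i : ℝ) + Real.logb 2 (p i) ≤ Rstar n l p := by
    intro l i
    exact le_ciSup (Set.Finite.bddAbove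
      (Set.finite_range fun j => ((l j : ℝ) + Real.logb 2 (p j)))) i
  have hpt : ∀ (l : Fin n → ℤ) (i : Fin n) (R : ℝ),
      (l i : ℝ) + Real.logb 2 (p i) ≤ R → p i ≤ (2:ℝ) ^ R * (2:ℝ) ^ (-(l i)) := by
    intro l i R h
    have h' : Real.logb 2 (p i) ≤ R - (l i : ℝ) := by linarith
    have hle := (Real.logb_le_iff_le_rpow one_lt_two (hpos i)).mp h'
    calc p i ≤ (2:ℝ) ^ (R - (l i : ℝ)) := hle
    _ = (2:ℝ) ^ R * (2:ℝ) ^ (-(l i)) := by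
        rw [Real.rpow_sub two_pos, div_eq_mul_inv, ← Real.rpow_intCast (2:ℝ) (-(l i))]
        push_cast
        rw [Real.rpow_neg (by norm_num)]
  have lemA : ∀ l : Fin n → ℤ, IsCLV n l → 0 ≤ Rstar n l p := by
    intro l hl
    have h1' : (1:ℝ) ≤ (2:ℝ) ^ (Rstar n l p) := by
      have hs : (1:ℝ) ≤ (2:ℝ) ^ (Rstar n l p) * ∑ i, (2:ℝ) ^ (-(l i)) := by
        rw [← hsum, Finset.mul_sum]
        exact Finset.sum_le_sum fun i _ => hpt l i _ (hterm l i)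
      calc (1:ℝ) ≤ (2:ℝ) ^ (Rstar n l p) * ∑ i, (2:ℝ) ^ (-(l i)) := hs
      _ ≤ (2:ℝ) ^ (Rstar n l p) * 1 :=
          mul_le_mul_of_nonneg_left hl.2 (Real.rpow_nonneg (by norm_num) _)
      _ = (2:ℝ) ^ (Rstar n l p) := mul_one _
    rwa [show (1:ℝ) = (2:ℝ)^(0:ℝ) by norm_num,
      Real.rpow_le_rpow_left_iff one_lt_two] at h1'
  have lemB : ∀ l : Fin n → ℤ, IsCLV n l →
      (ν:ℝ) + Real.logb 2 (p i0) ≤ Rstar n l p := by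
    intro l hl
    by_contra hcon
    push_neg at hcon
    have htlt : ∀ i : Fin n, (l i : ℝ) + Real.logb 2 (p i) < (ν:ℝ) + Real.logb 2 (p i0) :=
      fun i => lt_of_le_of_lt (hterm l i) hcon
    have hl0 : l i0 ≤ (ν:ℤ) - 1 := by
      have h' := htlt i0
      have h'' : (l i0 : ℝ) < (ν:ℝ) := by linarith
      have : l i0 < (ν:ℤ) := by exact_mod_cast h''
      omega
    have hplt : ∀ i : Fin n, p i < p i0 * 2^ν * (2:ℝ) ^ (-(l i)) := by
      intro i
      have h' : Real.logb 2 (p i) < (ν:ℝ) + Real.logb 2 (p i0) - (l i : ℝ) := by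
        have := htlt i; linarith
      have hlt := (Real.logb_lt_iff_lt_rpow one_lt_two (hpos i)).mp h'
      calc p i < (2:ℝ) ^ ((ν:ℝ) + Real.logb 2 (p i0) - (l i : ℝ)) := hlt
      _ = p i0 * 2^ν * (2:ℝ) ^ (-(l i)) := by
          rw [Real.rpow_sub two_pos, Real.rpow_add two_pos,
            Real.rpow_logb two_pos (by norm_num) hp1pos, div_eq_mul_inv,
            ← Real.rpow_intCast (2:ℝ) (-(l i))]
          push_cast
          rw [Real.rpow_neg (by norm_num), Real.rpow_natCast]
          ring
    have hne : (Finset.univ.erase i0).Nonempty := by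
      refine ⟨⟨1, by omega⟩, Finset.mem_erase.mpr ⟨?_, Finset.mem_univ _⟩⟩
      simp [hi0, Fin.ext_iff]
    have hsumlt : ∑ i ∈ Finset.univ.erase i0, p i
        < ∑ i ∈ Finset.univ.erase i0, p i0 * 2^ν * (2:ℝ) ^ (-(l i)) :=
      Finset.sum_lt_sum_of_nonempty hne fun i _ => hplt i
    have hsplit : ∑ i ∈ Finset.univ.erase i0, p i = 1 - p i0 := by
      have := Finset.add_sum_erase Finset.univ p (Finset.mem_univ i0)
      rw [hsum] at this; linarith
    have hksplit : ∑ i ∈ Finset.univ.erase i0, (2:ℝ) ^ (-(l i))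
        ≤ 1 - (2:ℝ) ^ (-(l i0)) := by
      have he := Finset.add_sum_erase Finset.univ (fun i => (2:ℝ) ^ (-(l i)))
        (Finset.mem_univ i0)
      have hk := hl.2
      rw [← he] at hk
      linarith
    have hz : (2:ℝ) ^ ((1:ℤ) - ν) ≤ (2:ℝ) ^ (-(l i0)) := by
      apply zpow_le_zpow_right₀ one_le_two; omega
    have hzeq : (2:ℝ) ^ ((1:ℤ) - ν) = 2 / 2^ν := by
      rw [zpow_sub₀ (by norm_num : (2:ℝ) ≠ 0)]
      norm_num
    have hfin : 1 - p i0 < p i0 * 2^ν * (1 - 2 / 2^ν) := by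
      calc 1 - p i0 = ∑ i ∈ Finset.univ.erase i0, p i := hsplit.symm
      _ < ∑ i ∈ Finset.univ.erase i0, p i0 * 2^ν * (2:ℝ) ^ (-(l i)) := hsumlt
      _ = p i0 * 2^ν * ∑ i ∈ Finset.univ.erase i0, (2:ℝ) ^ (-(l i)) := by
          rw [Finset.mul_sum]
      _ ≤ p i0 * 2^ν * (1 - (2:ℝ) ^ (-(l i0))) := by
          apply mul_le_mul_of_nonneg_left hksplit; positivity
      _ ≤ p i0 * 2^ν * (1 - 2 / 2^ν) := by
          apply mul_le_mul_of_nonneg_left _ (by positivity)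
          rw [← hzeq]; linarith
    have hexp : p i0 * 2^ν * (1 - 2 / 2^ν) = p i0 * (2^ν - 2) := by
      field_simp
    rw [hexp] at hfin
    have hple1 : p i0 * (2^ν - 1) ≤ 1 := by
      calc p i0 * (2^ν-1) ≤ 1/(2^ν-1) * (2^ν-1) :=
          mul_le_mul_of_nonneg_right h1 (by linarith)
      _ = 1 := by field_simp
    linarith
  set S := {r : ℝ | ∃ l : Fin n → ℤ, IsCLV n l ∧ Rstar n l p = r} with hS
  have hSne : S.Nonempty := by
    refine ⟨Rstar n (fun _ => (n:ℤ)) p, fun _ => (n:ℤ),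
      ⟨fun _ => by show (1:ℤ) ≤ (n:ℤ); exact_mod_cast (by omega : 1 ≤ n), ?_⟩, rfl⟩
    have he : ∑ _i : Fin n, (2:ℝ) ^ (-(n:ℤ)) = n * (2:ℝ) ^ (-(n:ℤ)) := by
      rw [Finset.sum_const, Finset.card_univ, Fintype.card_fin, nsmul_eq_mul]
    rw [he, zpow_neg, zpow_natCast, mul_inv_le_iff₀ (by positivity), one_mul]
    exact_mod_cast (Nat.lt_two_pow_self (n := n)).le
  have hSbdd : BddBelow S := ⟨0, fun x ⟨l, hl, he⟩ => he ▸ lemA l hl⟩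
  have hr0 : 0 ≤ RstarOpt n p := le_csInf hSne fun x ⟨l, hl, he⟩ => he ▸ lemA l hl
  have hrν : (ν:ℝ) + Real.logb 2 (p i0) ≤ RstarOpt n p :=
    le_csInf hSne fun x ⟨l, hl, he⟩ => he ▸ lemB l hl
  set r := RstarOpt n p with hr
  set l : Fin n → ℤ := fun i => ⌊r - Real.logb 2 (p i)⌋ with hldef
  have hlogle : ∀ i, Real.logb 2 (p i) ≤ -1 := by
    intro i
    apply (Real.logb_le_iff_le_rpow one_lt_two (hpos i)).mpr
    rw [Real.rpow_neg_one]
    calc p i ≤ 1/3 := (hple i).trans hp1le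
    _ ≤ (2:ℝ)⁻¹ := by norm_num
  have hl1 : ∀ i, 1 ≤ l i := by
    intro i
    apply Int.le_floor.mpr
    push_cast
    have := hlogle i
    linarith
  have hlle : ∀ i, (l i : ℝ) ≤ r - Real.logb 2 (p i) := fun i => Int.floor_le _
  have hkraft : ∑ i, (2:ℝ) ^ (-(l i)) ≤ 1 := by
    by_contra hcon
    push_neg at hcon
    set δ := Finset.univ.inf' Finset.univ_nonempty
      (fun i => ((l i : ℝ) + 1) - (r - Real.logb 2 (p i))) with hδ
    have hδpos : 0 < δ := by
      rw [hδ, Finset.lt_inf'_iff]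
      intro i _
      have := Int.lt_floor_add_one (r - Real.logb 2 (p i))
      linarith
    have hlower : ∀ x ∈ S, r + δ ≤ x := by
      rintro x ⟨l', hl', rfl⟩
      obtain ⟨i, hi⟩ : ∃ i, l i < l' i := by
        by_contra hall
        push_neg at hall
        have hmono2 : ∑ i, (2:ℝ)^(-(l i)) ≤ ∑ i, (2:ℝ)^(-(l' i)) :=
          Finset.sum_le_sum fun i _ =>
            zpow_le_zpow_right₀ one_le_two (by have := hall i; omega)
        linarith [hl'.2]
      have hli : (l i : ℝ) + 1 ≤ (l' i : ℝ) := by exact_mod_cast hi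
      have hδle : δ ≤ (l i : ℝ) + 1 - (r - Real.logb 2 (p i)) :=
        Finset.inf'_le _ (Finset.mem_univ i)
      have := hterm l' i
      linarith
    have : r + δ ≤ r := le_csInf hSne hlower
    linarith
  refine ⟨l, ⟨hl1, hkraft⟩, ?_, ?_⟩
  · apply le_antisymm
    · apply ciSup_le
      intro i
      have := hlle i
      linarith
    · exact csInf_le hSbdd ⟨l, ⟨hl1, hkraft⟩, rfl⟩
  · apply Int.le_floor.mpr
    push_cast
    linarith
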